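/- Let X be a real random variable with X ≤ 0 almost surely and with E[X] finite, let λ > 0 and L ≥ 1 an integer. Then E[exp(λ(−(1/λ)log(1 − λE[X]) − X) − ∑_{ℓ=2}^{2L} (1/ℓ)(λX)^ℓ)] ≤ 1. -/

import Mathlib

open MeasureTheory

private lemma key_nonneg (n : ℕ) (hn : Even n) (hn0 : 0 < n) (y : ℝ) (hy : y ≤ 0) :
    0 ≤ (∑ ℓ ∈ Finset.Icc 1 n, (1 / ℓ : ℝ) * y ^ ℓ) + Real.log (1 - y) := by
  set f : ℝ → ℝ := fun z => (∑ ℓ ∈ Finset.Icc 1 n, (1 / ℓ : ℝ) * z ^ ℓ) + Real.log (1 - z)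
    with hf
  have hderiv : ∀ z : ℝ, z < 1 → HasDerivAt f
      ((∑ ℓ ∈ Finset.Icc 1 n, z ^ (ℓ - 1)) - 1 / (1 - z)) z := by
    intro z hz
    have h1z : (1 : ℝ) - z ≠ 0 := by linarith
    have hlog : HasDerivAt (fun w : ℝ => Real.log (1 - w)) (-1 / (1 - z)) z := by
      have h1 : HasDerivAt (fun w : ℝ => 1 - w) (-1) z := by
        simpa using (hasDerivAt_id z).const_sub 1
      exact h1.log h1z
    have hsum : HasDerivAt (fun w : ℝ => ∑ ℓ ∈ Finset.Icc 1 n, (1 / ℓ : ℝ) * w ^ ℓ)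
        (∑ ℓ ∈ Finset.Icc 1 n, z ^ (ℓ - 1)) z := by
      apply HasDerivAt.fun_sum
      intro ℓ hℓ
      · have hℓ1 : 1 ≤ ℓ := (Finset.mem_Icc.mp hℓ).1
        have hℓ0 : (ℓ : ℝ) ≠ 0 := Nat.cast_ne_zero.mpr (by omega)
        have h2 := (hasDerivAt_pow ℓ z).const_mul (1 / ℓ : ℝ)
        refine h2.congr_deriv ?_
        rw [← mul_assoc, one_div_mul_cancel hℓ0, one_mul]
    have := hsum.add hlog
    exact this.congr_deriv (by ring)
  have hanti : AntitoneOn f (Set.Iic (0 : ℝ)) := by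
    apply antitoneOn_of_deriv_nonpos (convex_Iic 0)
    · intro z hz
      exact ((hderiv z (lt_of_le_of_lt hz one_pos)).continuousAt).continuousWithinAt
    · intro z hz
      rw [interior_Iic] at hz
      exact ((hderiv z (lt_trans hz one_pos)).differentiableAt).differentiableWithinAt
    · intro z hz
      rw [interior_Iic] at hz
      have hz1 : z < 1 := lt_trans hz one_pos
      rw [(hderiv z hz1).deriv]
      have h1z : (0 : ℝ) < 1 - z := by linarith
      have hre : (∑ ℓ ∈ Finset.Icc 1 n, z ^ (ℓ - 1)) = ∑ j ∈ Finset.range n, z ^ j := by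
        rw [← Finset.Ico_add_one_right_eq_Icc, Finset.sum_Ico_eq_sum_range]
        simp
      rw [hre, sub_nonpos]
      have hgeo : (∑ j ∈ Finset.range n, z ^ j) * (z - 1) = z ^ n - 1 := geom_sum_mul z n
      have hzn : 0 ≤ z ^ n := hn.pow_nonneg z
      have h2 : (∑ j ∈ Finset.range n, z ^ j) * (1 - z) ≤ 1 := by nlinarith
      exact (le_div_iff₀ h1z).mpr h2
  have h0 : f 0 = 0 := by
    simp only [hf]
    rw [Finset.sum_eq_zero]
    · norm_num
    · intro ℓ hℓ
      have : 1 ≤ ℓ := (Finset.mem_Icc.mp hℓ).1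
      rw [zero_pow (by omega)]; ring
  have := hanti (Set.mem_Iic.mpr hy) (Set.mem_Iic.mpr le_rfl) hy
  rw [h0] at this
  exact this

private lemma key_exp (n : ℕ) (hn : Even n) (hn1 : 1 ≤ n) (y : ℝ) (hy : y ≤ 0) :
    Real.exp (-y - ∑ ℓ ∈ Finset.Icc 2 n, (1 / ℓ : ℝ) * y ^ ℓ) ≤ 1 - y := by
  have hn2 : 2 ≤ n := by rcases hn with ⟨k, hk⟩; omega
  have hIcc : Finset.Icc 1 n = insert 1 (Finset.Icc 2 n) := by
    ext ℓ; simp only [Finset.mem_Icc, Finset.mem_insert]; omega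
  have hsplit : (∑ ℓ ∈ Finset.Icc 1 n, (1 / ℓ : ℝ) * y ^ ℓ)
      = y + ∑ ℓ ∈ Finset.Icc 2 n, (1 / ℓ : ℝ) * y ^ ℓ := by
    rw [hIcc, Finset.sum_insert (by simp)]
    norm_num
  have hkey := key_nonneg n hn (by omega) y hy
  rw [hsplit] at hkey
  have h1y : (0 : ℝ) < 1 - y := by linarith
  calc Real.exp (-y - ∑ ℓ ∈ Finset.Icc 2 n, (1 / ℓ : ℝ) * y ^ ℓ)
      ≤ Real.exp (Real.log (1 - y)) := Real.exp_le_exp.mpr (by linarith)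
    _ = 1 - y := Real.exp_log h1y

theorem stmt3 {Ω : Type*} [MeasurableSpace Ω] (μ : Measure Ω) [IsProbabilityMeasure μ]
    (X : Ω → ℝ) (hX : Integrable X μ) (hX0 : ∀ᵐ ω ∂μ, X ω ≤ 0)
    (lam : ℝ) (hlam : 0 < lam) (L : ℕ) (hL : 1 ≤ L) :
    ∫ ω, Real.exp (lam * (-(1 / lam) * Real.log (1 - lam * ∫ x, X x ∂μ) - X ω)
      - ∑ ℓ ∈ Finset.Icc 2 (2 * L), (1 / ℓ : ℝ) * (lam * X ω) ^ ℓ) ∂μ ≤ 1 := by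
  set m := ∫ x, X x ∂μ with hm
  have hm0 : m ≤ 0 := integral_nonpos_of_ae hX0
  set c := 1 - lam * m with hc
  have hc1 : 1 ≤ c := by nlinarith
  have hc0 : 0 < c := by linarith
  have hrw : ∀ ω : Ω, Real.exp (lam * (-(1 / lam) * Real.log c - X ω)
      - ∑ ℓ ∈ Finset.Icc 2 (2 * L), (1 / ℓ : ℝ) * (lam * X ω) ^ ℓ)
      = c⁻¹ * Real.exp (-(lam * X ω)
        - ∑ ℓ ∈ Finset.Icc 2 (2 * L), (1 / ℓ : ℝ) * (lam * X ω) ^ ℓ) := by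
    intro ω
    have : lam * (-(1 / lam) * Real.log c - X ω)
        - ∑ ℓ ∈ Finset.Icc 2 (2 * L), (1 / ℓ : ℝ) * (lam * X ω) ^ ℓ
        = (-Real.log c) + (-(lam * X ω)
          - ∑ ℓ ∈ Finset.Icc 2 (2 * L), (1 / ℓ : ℝ) * (lam * X ω) ^ ℓ) := by
      field_simp
      ring
    rw [this, Real.exp_add, Real.exp_neg, Real.exp_log hc0]
  simp_rw [hrw]
  have hgint : Integrable (fun ω => c⁻¹ * (1 - lam * X ω)) μ := by
    exact (((integrable_const (1 : ℝ)).sub (hX.const_mul lam)).const_mul c⁻¹)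
  have hmono : ∫ ω, c⁻¹ * Real.exp (-(lam * X ω)
      - ∑ ℓ ∈ Finset.Icc 2 (2 * L), (1 / ℓ : ℝ) * (lam * X ω) ^ ℓ) ∂μ
      ≤ ∫ ω, c⁻¹ * (1 - lam * X ω) ∂μ := by
    apply integral_mono_of_nonneg
    · filter_upwards with ω
      positivity
    · exact hgint
    · filter_upwards [hX0] with ω hω
      have hy : lam * X ω ≤ 0 := mul_nonpos_of_nonneg_of_nonpos hlam.le hω
      have := key_exp (2 * L) (even_two_mul L) (by omega) (lam * X ω) hy
      exact mul_le_mul_of_nonneg_left this (inv_nonneg.mpr hc0.le)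
  have heq : ∫ ω, c⁻¹ * (1 - lam * X ω) ∂μ = 1 := by
    rw [integral_const_mul, integral_sub (integrable_const 1) (hX.const_mul lam),
      integral_const_mul, integral_const]
    simp only [measure_univ, probReal_univ, smul_eq_mul, one_mul, ← hm]
    rw [← hc, inv_mul_cancel₀ hc0.ne']
  rw [heq] at hmono
  exact hmono
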